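/- In the single-labeled-segment IMR(1) recursion, the successive parameter estimates satisfy, for every k ≥ 0 with Σ_{t=1}^{ℓ+k} (z t)² ≠ 0, the increment identity φ (k+1) − φ k = φ k · (1 − (φ k)²) · (z (ℓ+k))² / (Σ_{t=1}^{ℓ+k+1} (z t)²). -/

import Mathlib

/-- Single-labeled-segment IMR(1) recursion: increment identity for the
successive parameter estimates. For every `k` with nonzero denominator,
`φ (k+1) − φ k = φ k · (1 − (φ k)²) · (z (ℓ+k))² / (Σ_{t=1}^{ℓ+k+1} (z t)²)`. -/
theorem imr1_parameter_increment
    (ℓ : ℕ) (hℓ : 2 ≤ ℓ) (z : ℕ → ℝ) (φ : ℕ → ℝ)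
    (hφ : ∀ k : ℕ, φ k = (∑ t ∈ Finset.Icc 1 (ℓ + k - 1), z t * z (t + 1)) /
      (∑ t ∈ Finset.Icc 1 (ℓ + k), (z t) ^ 2))
    (hz : ∀ k : ℕ, z (ℓ + k + 1) = φ k * z (ℓ + k)) :
    ∀ k : ℕ, (∑ t ∈ Finset.Icc 1 (ℓ + k), (z t) ^ 2) ≠ 0 →
      φ (k + 1) - φ k =
        φ k * (1 - (φ k) ^ 2) * (z (ℓ + k)) ^ 2 /
          (∑ t ∈ Finset.Icc 1 (ℓ + k + 1), (z t) ^ 2) := by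
  intro k hk
  set S := ∑ t ∈ Finset.Icc 1 (ℓ + k), (z t) ^ 2 with hSdef
  set N := ∑ t ∈ Finset.Icc 1 (ℓ + k - 1), z t * z (t + 1) with hNdef
  have hSpos : 0 < S :=
    lt_of_le_of_ne (Finset.sum_nonneg fun t _ => sq_nonneg _) (Ne.symm hk)
  have hNS : N = φ k * S := by
    rw [hφ k]; field_simp
    rw [← hNdef, ← hSdef]
    exact (mul_div_cancel_right₀ N hk).symm
  -- new denominator
  have hS1 : (∑ t ∈ Finset.Icc 1 (ℓ + k + 1), (z t) ^ 2)
      = S + (φ k * z (ℓ + k)) ^ 2 := by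
    rw [Finset.sum_Icc_succ_top (by omega : 1 ≤ ℓ + k + 1), hz k]
  -- new numerator
  have e1 : ℓ + (k + 1) - 1 = (ℓ + k - 1) + 1 := by omega
  have e2 : (ℓ + k - 1) + 1 = ℓ + k := by omega
  have hN1 : (∑ t ∈ Finset.Icc 1 (ℓ + (k + 1) - 1), z t * z (t + 1))
      = N + z (ℓ + k) * (φ k * z (ℓ + k)) := by
    rw [e1, Finset.sum_Icc_succ_top (by omega : 1 ≤ (ℓ + k - 1) + 1), e2]
    rw [hz k]
  have e3 : ℓ + (k + 1) = ℓ + k + 1 := by omega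
  have hS1pos : 0 < S + (φ k * z (ℓ + k)) ^ 2 :=
    lt_of_lt_of_le hSpos (by nlinarith [sq_nonneg (φ k * z (ℓ + k))])
  rw [hφ (k + 1), hN1, e3, hS1, hφ k, hNdef.symm, hSdef.symm, hNS]
  field_simp
  ring
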